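/- There exist absolute constants c₀ > 0 and C₄ > 0 such that the following holds. For every sufficiently large integer k, setting λ = c₀ · k^{-4} (log k)^{-2}, if x is sufficiently large in terms of k, then the number of admissible sets {h₁, ..., h_k} of k integers with 0 < h₁ < h₂ < ... < h_k < λ log x is at least exp(−C₄ k²) · (log x)^k. -/

import Mathlib

/-- A finite set of integers is admissible if for every prime `p` its elements do not cover
all residue classes modulo `p`. -/
def AdmissibleFinset (H : Finset ℕ) : Prop :=
  ∀ p : ℕ, p.Prime → ∃ r : ZMod p, ∀ h ∈ H, (h : ZMod p) ≠ r

/-- Key numeric inequality: `4 · k# · k⁵ · (log k)² ≤ e^{10k}` for `k ≥ 16`. -/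
lemma key_numeric (k : ℕ) (hk : 16 ≤ k) :
    4 * (primorial k : ℝ) * (k : ℝ) ^ 5 * (Real.log k) ^ 2 ≤ Real.exp (10 * k) := by
  have hk1 : (1 : ℝ) ≤ (k : ℝ) := by exact_mod_cast (by omega : 1 ≤ k)
  have hk0 : (0 : ℝ) ≤ (k : ℝ) := by linarith
  have hlog : Real.log k ≤ k := Real.log_le_self hk0
  have hlog0 : 0 ≤ Real.log k := Real.log_nonneg hk1
  have h1 : (Real.log k) ^ 2 ≤ (k : ℝ) ^ 2 := by
    exact pow_le_pow_left₀ hlog0 hlog 2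
  have hprim : (primorial k : ℝ) ≤ 4 ^ k := by
    exact_mod_cast primorial_le_4_pow k
  have hk2pow : (k : ℝ) ≤ 2 ^ k := by
    exact_mod_cast (Nat.lt_two_pow_self (n := k)).le
  have h2 : (k : ℝ) ^ 7 ≤ (2 : ℝ) ^ (7 * k) := by
    calc (k : ℝ) ^ 7 ≤ ((2 : ℝ) ^ k) ^ 7 := pow_le_pow_left₀ hk0 hk2pow 7
      _ = (2 : ℝ) ^ (7 * k) := by rw [← pow_mul, Nat.mul_comm]
  have h4 : (4 : ℝ) ^ k = (2 : ℝ) ^ (2 * k) := by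
    rw [pow_mul]; norm_num
  have h2e : (2 : ℝ) ≤ Real.exp 1 := by
    have := Real.add_one_le_exp (1 : ℝ); linarith
  have h5 : (2 : ℝ) ^ (9 * k + 2) ≤ Real.exp (10 * k) := by
    calc (2 : ℝ) ^ (9 * k + 2) ≤ (Real.exp 1) ^ (9 * k + 2) :=
          pow_le_pow_left₀ (by norm_num) h2e _
      _ = Real.exp ((9 * k + 2 : ℕ)) := by
          rw [← Real.exp_nat_mul]; norm_num
      _ ≤ Real.exp (10 * k) := by
          apply Real.exp_le_exp.mpr
          push_cast
          have : (16 : ℝ) ≤ (k : ℝ) := by exact_mod_cast hk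
          linarith
  calc 4 * (primorial k : ℝ) * (k : ℝ) ^ 5 * (Real.log k) ^ 2
      ≤ 4 * (primorial k : ℝ) * (k : ℝ) ^ 5 * (k : ℝ) ^ 2 := by
        apply mul_le_mul_of_nonneg_left h1; positivity
    _ = 4 * (primorial k : ℝ) * (k : ℝ) ^ 7 := by ring
    _ ≤ 4 * (4 : ℝ) ^ k * (2 : ℝ) ^ (7 * k) := by
        apply mul_le_mul (mul_le_mul_of_nonneg_left hprim (by norm_num)) h2
          (by positivity) (by positivity)
    _ = (2 : ℝ) ^ (9 * k + 2) := by
        rw [h4, show (4 : ℝ) = 2 ^ 2 by norm_num, ← pow_add, ← pow_add]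
        congr 1
        omega
    _ ≤ Real.exp (10 * k) := h5

/-- Subsets of multiples of the primorial are admissible. -/
lemma admissible_of_subset_multiples (k m : ℕ) (H : Finset ℕ)
    (hcard : H.card = k)
    (hsub : H ⊆ (Finset.Icc 1 m).image (fun i => i * primorial k)) :
    AdmissibleFinset H := by
  intro p hp
  by_cases hpk : p ≤ k
  · -- p divides the primorial; all elements are 0 mod p, take r = 1
    refine ⟨1, fun h hh => ?_⟩
    obtain ⟨i, _, rfl⟩ := Finset.mem_image.mp (hsub hh)
    have hdvd : p ∣ i * primorial k := by
      apply Dvd.dvd.mul_left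
      apply Finset.dvd_prod_of_mem
      simp only [Finset.mem_filter, Finset.mem_range]
      exact ⟨by omega, hp⟩
    haveI : Fact p.Prime := ⟨hp⟩
    have h0 : ((i * primorial k : ℕ) : ZMod p) = 0 :=
      (ZMod.natCast_eq_zero_iff _ _).mpr hdvd
    rw [h0]
    exact zero_ne_one
  · -- p > k = card H, so the residues cannot cover ZMod p
    push_neg at hpk
    haveI : Fact p.Prime := ⟨hp⟩
    by_contra hcon
    push_neg at hcon
    have hcover : (Finset.univ : Finset (ZMod p)) ⊆ H.image (Nat.cast : ℕ → ZMod p) := by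
      intro r _
      obtain ⟨h, hh, hr⟩ := hcon r
      exact Finset.mem_image.mpr ⟨h, hh, hr⟩
    have hcard1 : Fintype.card (ZMod p) ≤ (H.image (Nat.cast : ℕ → ZMod p)).card :=
      le_trans (by rw [Finset.card_univ]) (Finset.card_le_card hcover)
    have hcard2 : (H.image (Nat.cast : ℕ → ZMod p)).card ≤ k := by
      rw [← hcard]; exact Finset.card_image_le
    rw [ZMod.card p] at hcard1
    omega

theorem stmt6 :
    ∃ c₀ C₄ : ℝ, 0 < c₀ ∧ 0 < C₄ ∧ ∃ k₀ : ℕ, ∀ k : ℕ, k₀ ≤ k →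
    ∃ x₀ : ℝ, ∀ x : ℝ, x₀ ≤ x →
      ({H : Finset ℕ | H.card = k ∧
          (∀ h ∈ H, 0 < h ∧
            (h : ℝ) < (c₀ * ((k : ℝ) ^ 4)⁻¹ * ((Real.log k) ^ 2)⁻¹) * Real.log x) ∧
          AdmissibleFinset H}.ncard : ℝ)
        ≥ Real.exp (-C₄ * (k : ℝ) ^ 2) * (Real.log x) ^ k := by
  refine ⟨1, 10, one_pos, by norm_num, 16, fun k hk => ?_⟩
  have hk2 : (2 : ℝ) ≤ (k : ℝ) := by exact_mod_cast (by omega : 2 ≤ k)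
  have hk0 : (0 : ℝ) < (k : ℝ) := by linarith
  have hlogk : (0 : ℝ) < Real.log k := Real.log_pos (by linarith)
  set W : ℕ := primorial k with hWdef
  have hW0 : 0 < W := primorial_pos k
  have hWR : (0 : ℝ) < (W : ℝ) := by exact_mod_cast hW0
  set lam : ℝ := 1 * ((k : ℝ) ^ 4)⁻¹ * ((Real.log k) ^ 2)⁻¹ with hlamdef
  have hlam0 : 0 < lam := by positivity
  refine ⟨Real.exp (4 * W * (k + 1) / lam), fun x hx => ?_⟩
  have hx0 : (0 : ℝ) < x := lt_of_lt_of_le (Real.exp_pos _) hx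
  have hlogx : 4 * W * (k + 1) / lam ≤ Real.log x := by
    rw [← Real.log_exp (4 * W * (k + 1) / lam)]
    exact (Real.log_le_log_iff (Real.exp_pos _) hx0).mpr hx
  have hBpos : (0 : ℝ) < 4 * W * (k + 1) / lam := by positivity
  have hlogx0 : (0 : ℝ) < Real.log x := lt_of_lt_of_le hBpos hlogx
  set L : ℝ := lam * Real.log x with hLdef
  have hL0 : 0 < L := by positivity
  have hL : 4 * W * (k + 1) ≤ L := by
    rw [hLdef]
    calc (4 * W * (k + 1) : ℝ) = lam * (4 * W * (k + 1) / lam) := by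
          field_simp
      _ ≤ lam * Real.log x := by
          exact mul_le_mul_of_nonneg_left hlogx (le_of_lt hlam0)
  set m : ℕ := ⌊L / (2 * W)⌋₊ with hmdef
  have hm_le : (m : ℝ) ≤ L / (2 * W) := Nat.floor_le (by positivity)
  have hm_ge : L / (2 * W) - 1 < (m : ℝ) := Nat.sub_one_lt_floor _
  have hLW : 2 * ((k : ℝ) + 1) ≤ L / (2 * W) := by
    rw [le_div_iff₀ (by positivity)]
    calc 2 * ((k : ℝ) + 1) * (2 * W) = 4 * W * (k + 1) := by ring
      _ ≤ L := hL
  have hkm : k ≤ m := by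
    apply Nat.le_floor
    calc (k : ℝ) ≤ 2 * ((k : ℝ) + 1) := by linarith
      _ ≤ L / (2 * W) := hLW
  -- the collection of candidate sets
  set S' : Finset ℕ := (Finset.Icc 1 m).image (fun i => i * W) with hS'def
  have hS'card : S'.card = m := by
    rw [hS'def, Finset.card_image_of_injective _
      (fun a b hab => Nat.eq_of_mul_eq_mul_right hW0 hab), Nat.card_Icc]
    omega
  set T : Finset (Finset ℕ) := S'.powersetCard k with hTdef
  set Sset : Set (Finset ℕ) := {H : Finset ℕ | H.card = k ∧
          (∀ h ∈ H, 0 < h ∧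
            (h : ℝ) < (1 * ((k : ℝ) ^ 4)⁻¹ * ((Real.log k) ^ 2)⁻¹) * Real.log x) ∧
          AdmissibleFinset H} with hSsetdef
  have hTsub : (T : Set (Finset ℕ)) ⊆ Sset := by
    intro H hH
    rw [Finset.mem_coe, hTdef, Finset.mem_powersetCard] at hH
    obtain ⟨hHsub, hHcard⟩ := hH
    have hHsub' : H ⊆ S' := hHsub
    refine ⟨hHcard, ?_, admissible_of_subset_multiples k m H hHcard hHsub'⟩
    intro h hh
    obtain ⟨i, hi, rfl⟩ := Finset.mem_image.mp (hHsub' hh)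
    rw [Finset.mem_Icc] at hi
    constructor
    · exact Nat.mul_pos (by omega) hW0
    · have h1 : ((i * W : ℕ) : ℝ) ≤ (m : ℝ) * W := by
        push_cast
        apply mul_le_mul_of_nonneg_right _ (le_of_lt hWR)
        exact_mod_cast hi.2
      have h2 : (m : ℝ) * W ≤ L / 2 := by
        have h := mul_le_mul_of_nonneg_right hm_le
          (le_of_lt (show (0:ℝ) < 2 * W by positivity))
        rw [div_mul_cancel₀ _ (show (2:ℝ) * W ≠ 0 by positivity)] at h
        linarith
      calc ((i * W : ℕ) : ℝ) ≤ L / 2 := le_trans h1 h2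
        _ < L := by linarith
  -- finiteness of the target set
  have hfin : Sset.Finite := by
    apply Set.Finite.subset (Finset.finite_toSet (Finset.range (⌈L⌉₊ + 1)).powerset)
    intro H hH
    simp only [Finset.coe_powerset, Set.mem_preimage, Set.mem_powerset_iff,
      Finset.coe_subset, Finset.mem_coe, Finset.mem_powerset]
    intro h hh
    rw [Finset.mem_range]
    have := (hH.2.1 h hh).2
    have hhL : (h : ℝ) < L := this
    have : (h : ℝ) ≤ (⌈L⌉₊ : ℝ) := le_trans (le_of_lt hhL) (Nat.le_ceil L)
    have : h ≤ ⌈L⌉₊ := by exact_mod_cast this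
    omega
  have hcount : (T.card : ℝ) ≤ (Sset.ncard : ℝ) := by
    have : T.card ≤ Sset.ncard := by
      rw [← Set.ncard_coe_finset]
      exact Set.ncard_le_ncard hTsub hfin
    exact_mod_cast this
  have hTcard : T.card = m.choose k := by
    rw [hTdef, Finset.card_powersetCard, hS'card]
  -- now the real inequality
  set A : ℝ := Real.exp (-(10 : ℝ) * k) * Real.log x with hAdef
  have hA0 : 0 ≤ A := by positivity
  -- key: A * k ≤ m + 1 - k
  have hkey : A * k ≤ ((m + 1 - k : ℕ) : ℝ) := by
    have hcast : ((m + 1 - k : ℕ) : ℝ) = (m : ℝ) + 1 - k := by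
      have : k ≤ m + 1 := by omega
      push_cast [Nat.cast_sub this]
      ring
    rw [hcast]
    have hnum := key_numeric k hk
    -- A * k = k * exp(-10k) * log x ≤ lam/(4W) * log x = L/(4W)
    have h1 : A * k ≤ lam / (4 * W) * Real.log x := by
      rw [hAdef]
      have : Real.exp (-(10 : ℝ) * k) * k ≤ lam / (4 * W) := by
        rw [neg_mul, Real.exp_neg, inv_mul_eq_div,
          div_le_div_iff₀ (Real.exp_pos _) (by positivity)]
        have hkne : (k : ℝ) ≠ 0 := ne_of_gt hk0
        have hlkne : Real.log (k : ℝ) ≠ 0 := ne_of_gt hlogk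
        calc (k : ℝ) * (4 * W) = lam * (4 * (W:ℝ) * (k:ℝ)^5 * (Real.log k)^2) := by
              rw [hlamdef]; field_simp
          _ ≤ lam * Real.exp (10 * k) :=
              mul_le_mul_of_nonneg_left hnum hlam0.le
      calc Real.exp (-(10 : ℝ) * k) * Real.log x * k
          = Real.exp (-(10 : ℝ) * k) * k * Real.log x := by ring
        _ ≤ lam / (4 * W) * Real.log x :=
            mul_le_mul_of_nonneg_right this (le_of_lt hlogx0)
    have h2 : lam / (4 * W) * Real.log x = L / (4 * W) := by
      rw [hLdef]; ring
    have h3 : L / (4 * W) ≤ (m : ℝ) + 1 - k := by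
      have h4 : L / (4 * W) + ((k : ℝ) + 1) ≤ L / (2 * W) := by
        have : L / (2 * W) - L / (4 * W) = L / (4 * W) := by ring
        have h5 : (k : ℝ) + 1 ≤ L / (4 * W) := by
          have : L / (4 * W) = L / (2 * W) / 2 := by ring
          rw [this]
          linarith [hLW]
        linarith
      linarith [hm_ge]
    linarith [h1, h2.le, h2.ge, h3]
  -- conclude
  have hEq : Real.exp (-(10 : ℝ) * (k : ℝ) ^ 2) * (Real.log x) ^ k = A ^ k := by
    rw [hAdef, mul_pow, ← Real.exp_nat_mul]
    ring_nf
  rw [ge_iff_le, hEq]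
  refine le_trans ?_ hcount
  rw [hTcard]
  -- A^k ≤ choose m k
  have hnat : (m + 1 - k) ^ k ≤ k ^ k * m.choose k := by
    calc (m + 1 - k) ^ k ≤ m.descFactorial k := Nat.pow_sub_le_descFactorial m k
      _ = Nat.factorial k * m.choose k := Nat.descFactorial_eq_factorial_mul_choose m k
      _ ≤ k ^ k * m.choose k := Nat.mul_le_mul_right _ (Nat.factorial_le_pow k)
  have hpow : A ^ k * (k : ℝ) ^ k ≤ (m.choose k : ℝ) * (k : ℝ) ^ k := by
    calc A ^ k * (k : ℝ) ^ k = (A * k) ^ k := (mul_pow A (k : ℝ) k).symm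
      _ ≤ ((m + 1 - k : ℕ) : ℝ) ^ k := by
          apply pow_le_pow_left₀ (by positivity) hkey
      _ = (((m + 1 - k) ^ k : ℕ) : ℝ) := by push_cast; ring
      _ ≤ ((k ^ k * m.choose k : ℕ) : ℝ) := by exact_mod_cast hnat
      _ = (m.choose k : ℝ) * (k : ℝ) ^ k := by push_cast; ring
  exact le_of_mul_le_mul_right hpow (by positivity)
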